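/- Let K be a field of characteristic p > 0, let V be a finite-dimensional K-vector space, and let k ≥ 1 be an integer with p ∣ k and k ≤ dim V. Then the comultiplication map δ : Λ^k V → V ⊗_K Λ^{k−1}V is injective and its image is contained in the kernel of the wedge map m : V ⊗_K Λ^{k−1}V → Λ^k V. In particular, Λ^k V is isomorphic (as a K-vector space) to a subspace of ker m. -/

import Mathlib

set_option synthInstance.maxHeartbeats 1000000
set_option maxHeartbeats 1000000
set_option maxSynthPendingDepth 3

open ExteriorAlgebra TensorProduct

variable (R : Type*) [CommRing R] (V : Type*) [AddCommGroup V] [Module R V]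

/-- Multiplying by `ι R v` on the left sends the `n`-th exterior power into the `(n+1)`-st. -/
theorem iota_mul_mem_exteriorPower (v : V) {n : ℕ} {ω : ExteriorAlgebra R V}
    (hω : ω ∈ ⋀[R]^n V) : ι R v * ω ∈ ⋀[R]^(n+1) V := by
  have h : (⋀[R]^(n+1) V : Submodule R (ExteriorAlgebra R V)) =
      LinearMap.range (ι R : V →ₗ[R] ExteriorAlgebra R V) * ⋀[R]^n V := pow_succ' _ n
  rw [h]
  exact Submodule.mul_mem_mul (LinearMap.mem_range_self _ v) hω

/-- The bilinear map `v ↦ (ω ↦ v ∧ ω) : V → (Λⁿ V → Λ^{n+1} V)`. -/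
noncomputable def wedgeCurry (n : ℕ) : V →ₗ[R] (⋀[R]^n V) →ₗ[R] (⋀[R]^(n+1) V) where
  toFun v :=
    { toFun := fun ω => ⟨ι R v * ω.1, iota_mul_mem_exteriorPower R V v ω.2⟩
      map_add' := fun x y => Subtype.ext (by simp [mul_add])
      map_smul' := fun c x => Subtype.ext (by simp [mul_smul_comm]) }
  map_add' v w := LinearMap.ext fun ω => Subtype.ext (by simp [add_mul])
  map_smul' c v := LinearMap.ext fun ω => Subtype.ext (by simp [smul_mul_assoc])

/-- The wedge map `m : V ⊗ Λⁿ V → Λ^{n+1} V`, determined by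
`v ⊗ (v₁ ∧ ⋯ ∧ vₙ) ↦ v ∧ v₁ ∧ ⋯ ∧ vₙ`. -/
noncomputable def wedgeMap (n : ℕ) : V ⊗[R] (⋀[R]^n V) →ₗ[R] ⋀[R]^(n+1) V :=
  TensorProduct.lift (wedgeCurry R V n)

/-- The multilinear map `(v₀, …, vₙ) ↦ vᵢ ⊗ (v₀ ∧ ⋯ ∧ v̂ᵢ ∧ ⋯ ∧ vₙ)`
(the `i`-th term of the comultiplication, with `0`-based sign conventions). -/
noncomputable def deltaTerm (n : ℕ) (i : Fin (n + 1)) :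
    MultilinearMap R (fun _ : Fin (n + 1) => V) (V ⊗[R] (⋀[R]^n V)) where
  toFun v := v i ⊗ₜ[R]
    ⟨ιMulti R n (v ∘ i.succAbove), ιMulti_range R n (Set.mem_range_self _)⟩
  map_update_add' := by
    intro _ v j x y
    rcases eq_or_ne j i with rfl | hj
    · have hc : ∀ z : V, Function.update v j z ∘ j.succAbove = v ∘ j.succAbove := fun z =>
        Function.update_comp_eq_of_forall_ne _ _ fun a => Fin.succAbove_ne j a
      simp [hc, add_tmul]
    · obtain ⟨j', rfl⟩ := Fin.exists_succAbove_eq hj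
      have h1 : ∀ z : V, Function.update v (i.succAbove j') z i = v i := fun z =>
        Function.update_of_ne (Fin.ne_succAbove i j') z v
      have h2 : ∀ z : V, Function.update v (i.succAbove j') z ∘ i.succAbove =
          Function.update (v ∘ i.succAbove) j' z := fun z =>
        Function.update_comp_eq_of_injective v Fin.succAbove_right_injective j' z
      simp only [h1, h2]
      rw [← tmul_add]
      congr 1
      exact Subtype.ext (by simp)
  map_update_smul' := by
    intro _ v j c x
    rcases eq_or_ne j i with rfl | hj
    · have hc : ∀ z : V, Function.update v j z ∘ j.succAbove = v ∘ j.succAbove := fun z =>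
        Function.update_comp_eq_of_forall_ne _ _ fun a => Fin.succAbove_ne j a
      simp [hc, smul_tmul']
    · obtain ⟨j', rfl⟩ := Fin.exists_succAbove_eq hj
      have h1 : ∀ z : V, Function.update v (i.succAbove j') z i = v i := fun z =>
        Function.update_of_ne (Fin.ne_succAbove i j') z v
      have h2 : ∀ z : V, Function.update v (i.succAbove j') z ∘ i.succAbove =
          Function.update (v ∘ i.succAbove) j' z := fun z =>
        Function.update_comp_eq_of_injective v Fin.succAbove_right_injective j' z
      simp only [h1, h2]
      rw [← tmul_smul]
      congr 1
      exact Subtype.ext (by simp)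

@[simp]
theorem deltaTerm_apply (n : ℕ) (i : Fin (n + 1)) (v : Fin (n + 1) → V) :
    deltaTerm R V n i v = v i ⊗ₜ[R]
      ⟨ιMulti R n (v ∘ i.succAbove), ιMulti_range R n (Set.mem_range_self _)⟩ :=
  rfl

/-- A multilinear map that vanishes whenever two *adjacent* arguments are equal vanishes
whenever any two arguments are equal. -/
theorem MultilinearMap.eq_zero_of_eq_of_adjacent {N : Type*} [AddCommGroup N] [Module R N]
    {n : ℕ} (F : MultilinearMap R (fun _ : Fin (n + 1) => V) N)
    (H : ∀ (w : Fin (n + 1) → V) (c : Fin n), w c.castSucc = w c.succ → F w = 0)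
    (v : Fin (n + 1) → V) (x y : Fin (n + 1)) (hvxy : v x = v y) (hxy : x ≠ y) :
    F v = 0 := by
  classical
  -- swapping two adjacent arguments changes the sign
  have hswap : ∀ (v : Fin (n + 1) → V) (c : Fin n),
      F (Function.update (Function.update v c.castSucc (v c.succ)) c.succ (v c.castSucc)) =
        -F v := by
    intro v c
    have hij : c.castSucc ≠ c.succ := (Fin.castSucc_lt_succ (i := c)).ne
    have h0 : F (Function.update (Function.update v c.castSucc (v c.castSucc + v c.succ))
        c.succ (v c.castSucc + v c.succ)) = 0 := by
      refine H _ c ?_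
      rw [Function.update_of_ne hij, Function.update_self, Function.update_self]
    rw [F.map_update_add] at h0
    rw [Function.update_comm hij (v c.castSucc + v c.succ) (v c.castSucc) v,
      Function.update_comm hij (v c.castSucc + v c.succ) (v c.succ) v,
      F.map_update_add, F.map_update_add] at h0
    have T1 : F (Function.update (Function.update v c.succ (v c.castSucc)) c.castSucc
        (v c.castSucc)) = 0 := by
      refine H _ c ?_
      rw [Function.update_self, Function.update_of_ne hij.symm, Function.update_self]
    have T4 : F (Function.update (Function.update v c.succ (v c.succ)) c.castSucc
        (v c.succ)) = 0 := by
      refine H _ c ?_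
      rw [Function.update_self, Function.update_of_ne hij.symm, Function.update_self]
    have T3 : F (Function.update (Function.update v c.succ (v c.succ)) c.castSucc
        (v c.castSucc)) = F v := by
      rw [Function.update_eq_self, Function.update_eq_self]
    have T2 : Function.update (Function.update v c.succ (v c.castSucc)) c.castSucc (v c.succ) =
        Function.update (Function.update v c.castSucc (v c.succ)) c.succ (v c.castSucc) :=
      Function.update_comm hij.symm (v c.castSucc) (v c.succ) v
    rw [T1, T2, T3, T4] at h0
    -- h0 : 0 = (0 + F(swapped)) + (F v + 0)  (up to arrangement)
    have h0' : F (Function.update (Function.update v c.castSucc (v c.succ)) c.succ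
        (v c.castSucc)) + F v = 0 := by linear_combination (norm := abel) h0
    exact eq_neg_of_add_eq_zero_left h0'
  -- main induction on the distance between the two equal coordinates
  have aux : ∀ d : ℕ, ∀ (v : Fin (n + 1) → V) (x y : Fin (n + 1)), x < y →
      (y : ℕ) = (x : ℕ) + d + 1 → v x = v y → F v = 0 := by
    intro d
    induction d with
    | zero =>
      intro v x y hlt hyx hv
      have hxn : (x : ℕ) < n := by have := y.isLt; omega
      have hcx : (⟨(x : ℕ), hxn⟩ : Fin n).castSucc = x := by
        apply Fin.ext; simp
      have hcy : (⟨(x : ℕ), hxn⟩ : Fin n).succ = y := by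
        apply Fin.ext; simp [hyx]
      exact H v ⟨(x : ℕ), hxn⟩ (by rw [hcx, hcy]; exact hv)
    | succ d ih =>
      intro v x y hlt hyx hv
      have hzn : (y : ℕ) - 1 < n := by have := y.isLt; omega
      set c : Fin n := ⟨(y : ℕ) - 1, hzn⟩ with hc
      have hcy : c.succ = y := by apply Fin.ext; simp [hc]; omega
      have hxz : x ≠ c.castSucc := by
        intro h
        have : (x : ℕ) = (y : ℕ) - 1 := by rw [h]; simp [hc]
        omega
      have hxy' : x ≠ c.succ := by rw [hcy]; exact hlt.ne
      set v' := Function.update (Function.update v c.castSucc (v c.succ)) c.succ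
        (v c.castSucc) with hv'
      have hvx' : v' x = v x := by
        rw [hv', Function.update_of_ne hxy', Function.update_of_ne hxz]
      have hvz' : v' c.castSucc = v y := by
        rw [hv', Function.update_of_ne (Fin.castSucc_lt_succ (i := c)).ne, Function.update_self, hcy]
      have hlt' : x < c.castSucc := by
        rw [Fin.lt_iff_val_lt_val]; simp [hc]; omega
      have hdist : ((c.castSucc : Fin (n + 1)) : ℕ) = (x : ℕ) + d + 1 := by simp [hc]; omega
      have h0 : F v' = 0 := ih v' x c.castSucc hlt' hdist (by rw [hvx', hvz', hv])
      have h1 : F v' = -F v := hswap v c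
      rw [h0] at h1
      exact neg_eq_zero.mp h1.symm
  rcases hxy.lt_or_gt with h | h
  · have hn : (x : ℕ) < (y : ℕ) := h
    exact aux ((y : ℕ) - (x : ℕ) - 1) v x y h (by omega) hvxy
  · have hn : (y : ℕ) < (x : ℕ) := h
    exact aux ((x : ℕ) - (y : ℕ) - 1) v y x h (by omega) hvxy.symm

/-- The comultiplication sum vanishes on tuples with two equal adjacent entries. -/
theorem deltaSum_adjacent_eq_zero (n : ℕ) (w : Fin (n + 1) → V) (c : Fin n)
    (hwc : w c.castSucc = w c.succ) :
    (∑ i : Fin (n + 1), ((-1 : R) ^ (i : ℕ)) • deltaTerm R V n i) w = 0 := by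
  classical
  rw [MultilinearMap.sum_apply]
  simp only [MultilinearMap.smul_apply, deltaTerm_apply]
  have hcc : c.castSucc ≠ c.succ := (Fin.castSucc_lt_succ (i := c)).ne
  rw [← Finset.sum_subset
    (Finset.subset_univ ({c.castSucc, c.succ} : Finset (Fin (n + 1))))]
  · -- the two remaining (adjacent) terms cancel
    rw [Finset.sum_pair hcc]
    have hGG : w ∘ (c.castSucc).succAbove = w ∘ (c.succ).succAbove := by
      funext a
      rcases eq_or_ne a c with rfl | hac
      · simp only [Function.comp_apply]
        rw [Fin.succAbove_castSucc_self, Fin.succAbove_succ_self]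
        exact hwc.symm
      · simp only [Function.comp_apply]
        congr 1
        rcases lt_or_gt_of_ne hac with hlt | hgt
        · rw [Fin.succAbove_castSucc_of_lt c a hlt, Fin.succAbove_succ_of_le c a hlt.le]
        · rw [Fin.succAbove_castSucc_of_le c a hgt.le, Fin.succAbove_succ_of_lt c a hgt]
    have hsub : (⟨ιMulti R n (w ∘ (c.castSucc).succAbove),
          ιMulti_range R n (Set.mem_range_self _)⟩ : (⋀[R]^n V)) =
        ⟨ιMulti R n (w ∘ (c.succ).succAbove), ιMulti_range R n (Set.mem_range_self _)⟩ :=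
      Subtype.ext (by rw [hGG])
    rw [hsub, hwc, Fin.coe_castSucc, Fin.val_succ, pow_succ, mul_neg_one, ← add_smul,
      add_neg_cancel, zero_smul]
  · intro i _ hi
    simp only [Finset.mem_insert, Finset.mem_singleton, not_or] at hi
    obtain ⟨hic, his⟩ := hi
    obtain ⟨a, ha⟩ := Fin.exists_succAbove_eq (Ne.symm hic)
    obtain ⟨b, hb⟩ := Fin.exists_succAbove_eq (Ne.symm his)
    have hab : a ≠ b := by
      intro h; apply hcc; rw [← ha, ← hb, h]
    have hzero : ιMulti R n (w ∘ i.succAbove) = 0 :=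
      AlternatingMap.map_eq_zero_of_eq _ _
        (by simp only [Function.comp_apply]; rw [ha, hb]; exact hwc) hab
    rw [show (⟨ιMulti R n (w ∘ i.succAbove), ιMulti_range R n (Set.mem_range_self _)⟩ :
        (⋀[R]^n V)) = 0 from Subtype.ext hzero, tmul_zero, smul_zero]

/-- The alternating multilinear map
`(v₁, …, v_{n+1}) ↦ Σᵢ (−1)^{i−1} vᵢ ⊗ (v₁ ∧ ⋯ ∧ v̂ᵢ ∧ ⋯ ∧ v_{n+1})`. -/
noncomputable def deltaAlternating (n : ℕ) :
    V [⋀^Fin (n + 1)]→ₗ[R] (V ⊗[R] (⋀[R]^n V)) :=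
  { (∑ i : Fin (n + 1), ((-1 : R) ^ (i : ℕ)) • deltaTerm R V n i :
      MultilinearMap R (fun _ : Fin (n + 1) => V) (V ⊗[R] (⋀[R]^n V))) with
    map_eq_zero_of_eq' := by
      intro v x y hvxy hxy
      exact MultilinearMap.eq_zero_of_eq_of_adjacent R V
        (N := V ⊗[R] (⋀[R]^n V))
        (∑ i : Fin (n + 1), ((-1 : R) ^ (i : ℕ)) • deltaTerm R V n i)
        (deltaSum_adjacent_eq_zero R V n) v x y hvxy hxy }

/-- The comultiplication map `δ : Λ^{n+1} V → V ⊗ Λⁿ V`, the linear map induced on the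
`(n+1)`-st exterior power by the alternating multilinear map
`(v₁, …, v_{n+1}) ↦ Σᵢ (−1)^{i−1} vᵢ ⊗ (v₁ ∧ ⋯ ∧ v̂ᵢ ∧ ⋯ ∧ v_{n+1})`. -/
noncomputable def deltaMap (n : ℕ) : (⋀[R]^(n+1) V) →ₗ[R] V ⊗[R] (⋀[R]^n V) :=
  LinearMap.domRestrict
    (ExteriorAlgebra.liftAlternating (R := R) (M := V) (N := V ⊗[R] (⋀[R]^n V))
      (Function.update (fun _ => 0) (n + 1) (deltaAlternating R V n)))
    (⋀[R]^(n+1) V)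


/-! ### Auxiliary development -/

section AuxDev

variable {F : Type*} [Field F] {M : Type*} [AddCommGroup M] [Module F M]

/-- Two linear maps on the `k`-th exterior power agree if they agree on `ιMulti` elements. -/
theorem auxExtPower_linearMap_ext {k : ℕ} {W : Type*} [AddCommGroup W] [Module F W]
    {f g : (⋀[F]^k M) →ₗ[F] W}
    (h : ∀ v : Fin k → M,
      f ⟨ιMulti F k v, ιMulti_range F k (Set.mem_range_self _)⟩ =
      g ⟨ιMulti F k v, ιMulti_range F k (Set.mem_range_self _)⟩) : f = g := by
  have hspan : Submodule.span F (Set.range fun v : Fin k → M =>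
      (⟨ιMulti F k v, ιMulti_range F k (Set.mem_range_self _)⟩ : ⋀[F]^k M)) = ⊤ := by
    apply Submodule.map_injective_of_injective (⋀[F]^k M).injective_subtype
    rw [Submodule.map_span, Submodule.map_top, Submodule.range_subtype, ← Set.range_comp]
    exact ιMulti_span_fixedDegree F k
  refine LinearMap.ext_on hspan ?_
  rintro x ⟨v, rfl⟩
  exact h v

noncomputable def auxCoordMap {d k : ℕ} (b : Module.Basis (Fin d) F M) (s : Fin k → Fin d) :
    M →ₗ[F] (Fin k → F) :=
  LinearMap.pi fun j => b.coord (s j)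

noncomputable def auxDetForm {d k : ℕ} (b : Module.Basis (Fin d) F M) (s : Fin k → Fin d) :
    M [⋀^Fin k]→ₗ[F] F :=
  Matrix.detRowAlternating.compLinearMap (auxCoordMap b s)

lemma auxDetForm_apply {d k : ℕ} (b : Module.Basis (Fin d) F M) (s : Fin k → Fin d)
    (v : Fin k → M) :
    auxDetForm b s v = Matrix.det (Matrix.of fun i j => b.repr (v i) (s j)) := by
  have h : (auxCoordMap b s) ∘ v = Matrix.of fun i j => b.repr (v i) (s j) := by
    funext i j
    rw [Matrix.of_apply]
    simp [auxCoordMap]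
  simp only [auxDetForm, AlternatingMap.compLinearMap_apply, h]
  rfl

lemma auxDetForm_self {d k : ℕ} (b : Module.Basis (Fin d) F M) {s : Fin k → Fin d}
    (hs : Function.Injective s) : auxDetForm b s (b ∘ s) = 1 := by
  rw [auxDetForm_apply]
  have h : (Matrix.of fun i j => (b.repr ((b ∘ s) i)) (s j)) = (1 : Matrix (Fin k) (Fin k) F) := by
    ext i j
    simp [Module.Basis.repr_self, Finsupp.single_apply, Matrix.one_apply, hs.eq_iff]
  rw [h, Matrix.det_one]

lemma auxDetForm_eq_zero {d k : ℕ} (b : Module.Basis (Fin d) F M) {s u : Fin k → Fin d}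
    {i : Fin k} (hi : ∀ j, s j ≠ u i) : auxDetForm b s (b ∘ u) = 0 := by
  rw [auxDetForm_apply]
  apply Matrix.det_eq_zero_of_row_eq_zero i
  intro j
  have h : (b.repr ((b ∘ u) i)) (s j) = 0 := by
    rw [Function.comp_apply, Module.Basis.repr_self]
    exact Finsupp.single_eq_of_ne (hi j)
  simpa using h

noncomputable def auxEll {d : ℕ} (b : Module.Basis (Fin d) F M) (k : ℕ) (s : Fin k → Fin d) :
    (⋀[F]^k M) →ₗ[F] F :=
  LinearMap.domRestrict
    (ExteriorAlgebra.liftAlternating (R := F) (M := M) (N := F)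
      (Function.update (fun _ => 0) k (auxDetForm b s)))
    (⋀[F]^k M)

lemma auxEll_ιMulti {d k : ℕ} (b : Module.Basis (Fin d) F M) (s : Fin k → Fin d)
    (v : Fin k → M) (h : ιMulti F k v ∈ ⋀[F]^k M) :
    auxEll b k s ⟨ιMulti F k v, h⟩ = auxDetForm b s v := by
  simp [auxEll, ExteriorAlgebra.liftAlternating_apply_ιMulti]

noncomputable def auxBW {d : ℕ} (b : Module.Basis (Fin d) F M) (k : ℕ) (s : Fin k → Fin d) :
    ⋀[F]^k M :=
  ⟨ιMulti F k (b ∘ s), ιMulti_range F k (Set.mem_range_self _)⟩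

instance auxDecStrictMono {k d : ℕ} : DecidablePred (StrictMono : (Fin k → Fin d) → Prop) :=
  fun s => decidable_of_iff (∀ i j : Fin k, i < j → s i < s j) Iff.rfl

lemma auxAltMap_sum_apply {k : ℕ} {N : Type*} [AddCommGroup N] [Module F N]
    {α : Type*} (t : Finset α) (f : α → (M [⋀^Fin k]→ₗ[F] N)) (v : Fin k → M) :
    (∑ s ∈ t, f s) v = ∑ s ∈ t, f s v := by
  classical
  induction t using Finset.cons_induction with
  | empty => simp
  | cons a t ha ih => rw [Finset.sum_cons, Finset.sum_cons, AlternatingMap.add_apply, ih]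

lemma aux_recon_alternating {d k : ℕ} (b : Module.Basis (Fin d) F M) :
    (ιMulti F k : M [⋀^Fin k]→ₗ[F] ExteriorAlgebra F M) =
      ∑ s ∈ Finset.univ.filter (StrictMono : (Fin k → Fin d) → Prop),
        (LinearMap.toSpanSingleton F _ (ιMulti F k (b ∘ s))).compAlternatingMap
          (auxDetForm b s) := by
  apply Module.Basis.ext_alternating b
  intro u hu
  set T : Finset (Fin d) := Finset.univ.image u with hT
  have hTcard : T.card = k := by
    rw [hT, Finset.card_image_of_injective _ hu, Finset.card_univ, Fintype.card_fin]
  set mfun : Fin k → Fin d := fun i => ((T.orderIsoOfFin hTcard) i : Fin d) with hmfun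
  have hmsm : StrictMono mfun := fun i j hij =>
    Subtype.coe_lt_coe.mpr ((T.orderIsoOfFin hTcard).strictMono hij)
  have hrange_m : Set.range mfun = ↑T := by
    ext x
    constructor
    · rintro ⟨i, rfl⟩; exact ((T.orderIsoOfFin hTcard) i).2
    · intro hx
      refine ⟨(T.orderIsoOfFin hTcard).symm ⟨x, hx⟩, ?_⟩
      show ((T.orderIsoOfFin hTcard) ((T.orderIsoOfFin hTcard).symm ⟨x, hx⟩) : Fin d) = x
      rw [OrderIso.apply_symm_apply]
  have hrange_u : Set.range u = ↑T := by
    rw [hT, Finset.coe_image, Finset.coe_univ, Set.image_univ]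
  have hmem : ∀ i, u i ∈ T := fun i => Finset.mem_image_of_mem u (Finset.mem_univ i)
  have hbij : Function.Bijective (fun i => (⟨u i, hmem i⟩ : {x // x ∈ T})) := by
    rw [Fintype.bijective_iff_injective_and_card]
    refine ⟨fun a c hac => hu (by simpa using congrArg Subtype.val hac), ?_⟩
    simp [Fintype.card_coe, hTcard]
  set τ : Equiv.Perm (Fin k) :=
    (Equiv.ofBijective _ hbij).trans (T.orderIsoOfFin hTcard).toEquiv.symm with hτ
  have hmτ : ∀ i, mfun (τ i) = u i := by
    intro i
    simp only [hτ, Equiv.trans_apply, Equiv.ofBijective_apply, hmfun]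
    rw [show ((T.orderIsoOfFin hTcard).toEquiv.symm (⟨u i, hmem i⟩ : {x // x ∈ T})) =
      (T.orderIsoOfFin hTcard).symm ⟨u i, hmem i⟩ from rfl]
    rw [OrderIso.apply_symm_apply]
  have hcomp : (fun i => b (u i)) = (b ∘ mfun) ∘ τ := by
    funext i
    simp [Function.comp, hmτ i]
  rw [auxAltMap_sum_apply]
  rw [Finset.sum_eq_single_of_mem mfun
    (Finset.mem_filter.mpr ⟨Finset.mem_univ _, hmsm⟩)]
  · simp only [LinearMap.compAlternatingMap_apply, LinearMap.toSpanSingleton_apply]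
    have h1 : auxDetForm b mfun (fun i => b (u i)) =
        Equiv.Perm.sign τ • auxDetForm b mfun (b ∘ mfun) := by
      rw [hcomp]
      exact AlternatingMap.map_perm _ _ _
    have h2 : ιMulti F k (fun i => b (u i)) =
        Equiv.Perm.sign τ • ιMulti F k (b ∘ mfun) := by
      rw [hcomp]
      exact AlternatingMap.map_perm _ _ _
    rw [h1, h2, auxDetForm_self b hmsm.injective]
    rcases Int.units_eq_one_or (Equiv.Perm.sign τ) with h | h <;>
      simp [h, Units.smul_def]
  · intro s hs hsm
    have hssm : StrictMono s := (Finset.mem_filter.mp hs).2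
    have hzero : auxDetForm b s (fun i => b (u i)) = 0 := by
      by_contra hne
      have hexists : ∃ i, ∀ j, s j ≠ u i := by
        by_contra hno
        push_neg at hno
        have hsub : T ⊆ Finset.univ.image s := by
          intro x hx
          rw [hT] at hx
          obtain ⟨i, _, rfl⟩ := Finset.mem_image.mp hx
          obtain ⟨j, hj⟩ := hno i
          exact Finset.mem_image.mpr ⟨j, Finset.mem_univ j, hj⟩
        have hcardle : T.card ≤ (Finset.univ.image s).card := Finset.card_le_card hsub
        have hcardge : (Finset.univ.image s).card ≤ k := by
          calc (Finset.univ.image s).card ≤ (Finset.univ : Finset (Fin k)).card :=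
                Finset.card_image_le
            _ = k := by rw [Finset.card_univ, Fintype.card_fin]
        have heq : Finset.univ.image s = T :=
          (Finset.eq_of_subset_of_card_le hsub (by omega)).symm
        have hrs : Set.range s = Set.range mfun := by
          rw [hrange_m, ← heq, Finset.coe_image, Finset.coe_univ, Set.image_univ]
        haveI : WellFoundedLT (Fin k) := Finite.to_wellFoundedLT
        exact hsm ((StrictMono.range_inj (β := Fin k) (γ := Fin d) hssm hmsm).mp hrs)
      obtain ⟨i, hi⟩ := hexists
      exact hne (auxDetForm_eq_zero b hi)
    simp [hzero]

lemma aux_recon {d k : ℕ} (b : Module.Basis (Fin d) F M) (ω : ⋀[F]^k M) :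
    ω = ∑ s ∈ Finset.univ.filter (StrictMono : (Fin k → Fin d) → Prop),
      auxEll b k s ω • auxBW b k s := by
  have hmaps : (LinearMap.id : (⋀[F]^k M) →ₗ[F] (⋀[F]^k M)) =
      ∑ s ∈ Finset.univ.filter (StrictMono : (Fin k → Fin d) → Prop),
        (auxEll b k s).smulRight (auxBW b k s) := by
    apply auxExtPower_linearMap_ext
    intro v
    rw [LinearMap.id_apply]
    rw [LinearMap.sum_apply]
    apply Subtype.ext
    rw [Submodule.coe_sum]
    simp only [LinearMap.smulRight_apply, SetLike.val_smul, auxEll_ιMulti, auxBW]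
    have h0 : ιMulti F k v =
        (∑ s ∈ Finset.univ.filter (StrictMono : (Fin k → Fin d) → Prop),
          (LinearMap.toSpanSingleton F _ (ιMulti F k (b ∘ s))).compAlternatingMap
            (auxDetForm b s)) v := by
      conv_lhs => rw [aux_recon_alternating (k := k) b]
    rw [auxAltMap_sum_apply] at h0
    simp only [LinearMap.compAlternatingMap_apply,
      LinearMap.toSpanSingleton_apply] at h0
    exact h0
  have hid : ω = (LinearMap.id : (⋀[F]^k M) →ₗ[F] (⋀[F]^k M)) ω := rfl
  conv_lhs => rw [hid, hmaps]
  simp [LinearMap.sum_apply, LinearMap.smulRight_apply]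

lemma auxDeltaMap_ιMulti (n : ℕ) (v : Fin (n + 1) → M)
    (h : ιMulti F (n + 1) v ∈ ⋀[F]^(n+1) M) :
    deltaMap F M n ⟨ιMulti F (n + 1) v, h⟩ =
      ∑ i : Fin (n + 1), ((-1 : F) ^ (i : ℕ)) • (v i ⊗ₜ[F]
        (⟨ιMulti F n (v ∘ i.succAbove), ιMulti_range F n (Set.mem_range_self _)⟩ :
          ⋀[F]^n M)) := by
  simp only [deltaMap, LinearMap.domRestrict_apply,
    ExteriorAlgebra.liftAlternating_apply_ιMulti, Function.update_self]
  show (∑ i : Fin (n + 1), ((-1 : F) ^ (i : ℕ)) • deltaTerm F M n i :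
    MultilinearMap F (fun _ : Fin (n + 1) => M) (M ⊗[F] (⋀[F]^n M))) v = _
  rw [MultilinearMap.sum_apply]
  simp only [MultilinearMap.smul_apply, deltaTerm_apply]

noncomputable def auxPsi {d : ℕ} (b : Module.Basis (Fin d) F M) (n : ℕ) (s : Fin (n + 1) → Fin d) :
    (M ⊗[F] (⋀[F]^n M)) →ₗ[F] F :=
  TensorProduct.lift ((b.coord (s 0)).smulRight (auxEll b n (s ∘ Fin.succ)))

lemma auxPsi_comp_delta {d : ℕ} (b : Module.Basis (Fin d) F M) (n : ℕ) (s : Fin (n + 1) → Fin d) :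
    (auxPsi b n s).comp (deltaMap F M n) = auxEll b (n + 1) s := by
  apply auxExtPower_linearMap_ext
  intro v
  rw [LinearMap.comp_apply, auxDeltaMap_ιMulti, map_sum]
  rw [auxEll_ιMulti, auxDetForm_apply, Matrix.det_succ_column_zero]
  apply Finset.sum_congr rfl
  intro i _
  rw [map_smul]
  simp only [auxPsi, TensorProduct.lift.tmul, LinearMap.smulRight_apply,
    LinearMap.smul_apply, auxEll_ιMulti, smul_eq_mul, Module.Basis.coord_apply]
  rw [auxDetForm_apply]
  have hmat : (Matrix.of fun a c => (b.repr ((v ∘ i.succAbove) a)) ((s ∘ Fin.succ) c)) =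
      ((Matrix.of fun i j => b.repr (v i) (s j)).submatrix i.succAbove Fin.succ) := by
    ext a c
    simp [Matrix.submatrix_apply]
  rw [hmat]
  rw [Matrix.of_apply]
  ring

lemma auxIotaMul_ιMulti (n : ℕ) (v : Fin (n + 1) → M) (i : Fin (n + 1)) :
    ι F (v i) * ιMulti F n (v ∘ i.succAbove) = ((-1 : F) ^ (i : ℕ)) • ιMulti F (n + 1) v := by
  have h1 : ι F (v i) * ιMulti F n (v ∘ i.succAbove) =
      ιMulti F (n + 1) (Fin.cons (v i) (v ∘ i.succAbove)) := by
    have hz : (Fin.cons (v i) (v ∘ i.succAbove) : Fin (n + 1) → M) 0 = v i := rfl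
    have ht : Matrix.vecTail (Fin.cons (v i) (v ∘ i.succAbove) : Fin (n + 1) → M) =
        v ∘ i.succAbove := by
      funext j
      simp [Matrix.vecTail]
    rw [ιMulti_succ_apply, hz, ht]
  have h2 : (Fin.cons (v i) (v ∘ i.succAbove) : Fin (n + 1) → M) =
      v ∘ ⇑(i.cycleRange⁻¹) := by
    funext j
    induction j using Fin.cases with
    | zero =>
      have : (i.cycleRange)⁻¹ 0 = i := by
        rw [Equiv.Perm.inv_eq_iff_eq]
        exact (Fin.cycleRange_self i).symm
      simp [this]
    | succ j =>
      have : (i.cycleRange)⁻¹ j.succ = i.succAbove j := by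
        rw [Equiv.Perm.inv_eq_iff_eq]
        exact (Fin.cycleRange_succAbove i j).symm
      simp [this]
  rw [h1, h2, AlternatingMap.map_perm]
  rw [Equiv.Perm.sign_inv, Fin.sign_cycleRange]
  rcases Nat.even_or_odd (i : ℕ) with h | h <;>
    simp [h.neg_one_pow, Units.smul_def, Odd.neg_one_pow]

lemma auxWedge_comp_delta (n : ℕ) (hchar : ((n + 1 : ℕ) : F) = 0) :
    (wedgeMap F M n).comp (deltaMap F M n) = 0 := by
  apply auxExtPower_linearMap_ext
  intro v
  rw [LinearMap.comp_apply, auxDeltaMap_ιMulti, map_sum, LinearMap.zero_apply]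
  apply Subtype.ext
  rw [Submodule.coe_sum]
  have hterm : ∀ i : Fin (n + 1),
      ((wedgeMap F M n ((((-1 : F) ^ (i : ℕ)) • ((v i) ⊗ₜ[F]
        (⟨ιMulti F n (v ∘ i.succAbove), ιMulti_range F n (Set.mem_range_self _)⟩ :
          ⋀[F]^n M))) : M ⊗[F] (⋀[F]^n M)) : ⋀[F]^(n+1) M) : ExteriorAlgebra F M)
        = ιMulti F (n + 1) v := by
    intro i
    rw [map_smul]
    have hw : wedgeMap F M n ((v i) ⊗ₜ[F]
        (⟨ιMulti F n (v ∘ i.succAbove), ιMulti_range F n (Set.mem_range_self _)⟩ :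
          ⋀[F]^n M)) =
        ⟨ι F (v i) * ιMulti F n (v ∘ i.succAbove),
          iota_mul_mem_exteriorPower F M (v i) (ιMulti_range F n (Set.mem_range_self _))⟩ := by
      simp [wedgeMap, TensorProduct.lift.tmul, wedgeCurry]
    rw [hw]
    rw [SetLike.val_smul]
    show ((-1 : F) ^ (i : ℕ)) • (ι F (v i) * ιMulti F n (v ∘ i.succAbove)) = _
    rw [auxIotaMul_ιMulti, smul_smul, ← mul_pow]
    norm_num
  rw [Finset.sum_congr rfl (fun i _ => hterm i)]
  rw [Finset.sum_const, Finset.card_univ, Fintype.card_fin]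
  rw [← Nat.cast_smul_eq_nsmul F, hchar, zero_smul]
  simp

lemma auxDeltaMap_injective [FiniteDimensional F M] (n : ℕ) :
    Function.Injective (deltaMap F M n) := by
  set b := Module.finBasis F M with hb
  rw [← LinearMap.ker_eq_bot, Submodule.eq_bot_iff]
  intro ω hω
  rw [LinearMap.mem_ker] at hω
  have hell : ∀ s : Fin (n + 1) → Fin (Module.finrank F M), auxEll b (n + 1) s ω = 0 := by
    intro s
    have h := LinearMap.congr_fun (auxPsi_comp_delta b n s) ω
    rw [LinearMap.comp_apply, hω, map_zero] at h
    exact h.symm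
  rw [aux_recon b ω]
  apply Finset.sum_eq_zero
  intro s _
  rw [hell s, zero_smul]

end AuxDev

/-- Let `K` be a field of characteristic `p > 0`, `V` a finite-dimensional `K`-vector space,
and `k ≥ 1` an integer with `p ∣ k` and `k ≤ dim V`.  Then the comultiplication
`δ : Λᵏ V → V ⊗ Λ^{k−1} V` is injective with image contained in the kernel of the wedge map
`m : V ⊗ Λ^{k−1} V → Λᵏ V`; in particular `Λᵏ V` is isomorphic, as a `K`-vector space, to a
subspace of `ker m`. -/
theorem deltaMap_injective_and_range_le_ker (K : Type*) [Field K] (p : ℕ) [CharP K p]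
    (hp : 0 < p) (V : Type*) [AddCommGroup V] [Module K V] [FiniteDimensional K V]
    (k : ℕ) (hk : 1 ≤ k) (hpk : p ∣ k) (hkV : k ≤ Module.finrank K V) :
    Function.Injective (deltaMap K V (k - 1)) ∧
    LinearMap.range (deltaMap K V (k - 1)) ≤ LinearMap.ker (wedgeMap K V (k - 1)) ∧
    ∃ W : Submodule K (LinearMap.ker (wedgeMap K V (k - 1))),
      Nonempty ((⋀[K]^(k - 1 + 1) V) ≃ₗ[K] W) := by
  have hchar : ((k : ℕ) : K) = 0 := (CharP.cast_eq_zero_iff K p k).mpr hpk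
  have hk1 : k - 1 + 1 = k := Nat.succ_pred_eq_of_pos hk
  have hchar' : ((k - 1 + 1 : ℕ) : K) = 0 := by rw [hk1]; exact hchar
  have hcomp : (wedgeMap K V (k - 1)).comp (deltaMap K V (k - 1)) = 0 :=
    auxWedge_comp_delta (k - 1) hchar'
  have hinj : Function.Injective (deltaMap K V (k - 1)) := auxDeltaMap_injective (k - 1)
  have hle : LinearMap.range (deltaMap K V (k - 1)) ≤ LinearMap.ker (wedgeMap K V (k - 1)) := by
    rintro x ⟨y, rfl⟩
    rw [LinearMap.mem_ker, ← LinearMap.comp_apply, hcomp, LinearMap.zero_apply]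
  refine ⟨hinj, hle, ?_⟩
  have hmem : ∀ x, deltaMap K V (k - 1) x ∈ LinearMap.ker (wedgeMap K V (k - 1)) := fun x =>
    hle ⟨x, rfl⟩
  refine ⟨LinearMap.range ((deltaMap K V (k - 1)).codRestrict
    (LinearMap.ker (wedgeMap K V (k - 1))) hmem), ⟨LinearEquiv.ofInjective _ ?_⟩⟩
  intro x y hxy
  apply hinj
  have hval := congrArg Subtype.val hxy
  simpa using hval
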